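/- arXiv:1403.6696 — 2 statements merged into one kernel-verified Lean document; each statement's English description precedes it below -/
import Mathlib

section
/- Let n ≥ 5 be an integer, a ∈ ℂ, and b ∈ ℂ with b ≠ 0, and let A be the associated n×n tridiagonal matrix. Then det(A) = ∏_{k=1}^{n} (a + 2b·cos((k−1)π/(n−1))). -/
open Complex

/-- The `n × n` complex tridiagonal matrix `A` (1-based indices): `A_{j,j} = a`,
`A_{1,2} = 2b`, `A_{2,1} = b`, `A_{n-1,n} = b`, `A_{n,n-1} = 2b`,
`A_{j,j+1} = A_{j+1,j} = -b` for `2 ≤ j ≤ n-2`, all other entries `0`. -/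
def matA (n : ℕ) (a b : ℂ) : Matrix (Fin n) (Fin n) ℂ :=
  Matrix.of fun i j =>
    let i' := (i : ℕ) + 1
    let j' := (j : ℕ) + 1
    if i' = j' then a
    else if i' = 1 ∧ j' = 2 then 2 * b
    else if i' = 2 ∧ j' = 1 then b
    else if i' = n - 1 ∧ j' = n then b
    else if i' = n ∧ j' = n - 1 then 2 * b
    else if (i' + 1 = j' ∨ j' + 1 = i') ∧ 2 ≤ min i' j' ∧ min i' j' ≤ n - 2 then -b
    else 0

def triM (d c e : ℕ → ℂ) (n : ℕ) : Matrix (Fin n) (Fin n) ℂ :=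
  Matrix.of fun i j =>
    if (j : ℕ) = (i : ℕ) + 1 then c (i : ℕ)
    else if (i : ℕ) = (j : ℕ) + 1 then e (j : ℕ)
    else if (i : ℕ) = (j : ℕ) then d (i : ℕ)
    else 0

theorem triM_peel (d c e : ℕ → ℂ) (n : ℕ) :
    (triM d c e (n + 2)).det
      = d (n + 1) * (triM d c e (n + 1)).det - c n * e n * (triM d c e n).det := by
  rw [show ((n:ℕ) + 2) = (n + 1) + 1 from rfl, Matrix.det_succ_row _ (Fin.last (n + 1)),
    Fin.sum_univ_castSucc, Fin.sum_univ_castSucc]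
  have h0 : ∀ j : Fin n,
      (-1 : ℂ) ^ ((Fin.last (n+1) : ℕ) + ((Fin.castSucc (Fin.castSucc j)) : ℕ))
        * triM d c e (n+2) (Fin.last (n+1)) (Fin.castSucc (Fin.castSucc j))
        * ((triM d c e (n+2)).submatrix (Fin.last (n+1)).succAbove
            (Fin.castSucc (Fin.castSucc j)).succAbove).det = 0 := by
    intro j
    have hj := j.isLt
    have : triM d c e (n+2) (Fin.last (n+1)) (Fin.castSucc (Fin.castSucc j)) = 0 := by
      simp only [triM, Matrix.of_apply, Fin.coe_castSucc, Fin.val_last]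
      split_ifs <;> first | rfl | omega
    rw [this, mul_zero, zero_mul]
  rw [Finset.sum_eq_zero fun j _ => h0 j, zero_add]
  have hsign1 : ((-1 : ℂ)) ^ ((Fin.last (n+1) : ℕ) + ((Fin.last n).castSucc : ℕ)) = -1 := by
    simp only [Fin.val_last, Fin.coe_castSucc]
    exact Odd.neg_one_pow ⟨n, by ring⟩
  have hsign2 : ((-1 : ℂ)) ^ ((Fin.last (n+1) : ℕ) + (Fin.last (n+1) : ℕ)) = 1 := by
    exact Even.neg_one_pow ⟨n + 1, by simp⟩
  have hent1 : triM d c e (n+2) (Fin.last (n+1)) (Fin.last n).castSucc = e n := by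
    simp only [triM, Matrix.of_apply, Fin.coe_castSucc, Fin.val_last]
    split_ifs <;> first | rfl | omega
  have hent2 : triM d c e (n+2) (Fin.last (n+1)) (Fin.last (n+1)) = d (n+1) := by
    simp only [triM, Matrix.of_apply, Fin.val_last]
    split_ifs <;> first | rfl | omega
  have hsub2 : (triM d c e (n+2)).submatrix (Fin.last (n+1)).succAbove
      (Fin.last (n+1)).succAbove = triM d c e (n+1) := by
    rw [Fin.succAbove_last]
    ext i j
    simp only [Matrix.submatrix_apply, triM, Matrix.of_apply, Fin.coe_castSucc]
  have hminor : ((triM d c e (n+2)).submatrix (Fin.last (n+1)).succAbove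
      (Fin.last n).castSucc.succAbove).det = c n * (triM d c e n).det := by
    rw [Fin.succAbove_last]
    set B := (triM d c e (n+2)).submatrix Fin.castSucc (Fin.last n).castSucc.succAbove with hB
    have hcol : (Fin.last n).castSucc.succAbove (Fin.last n) = Fin.last (n+1) := by
      rw [Fin.succAbove_of_le_castSucc _ _ le_rfl, Fin.succ_last]
    rw [Matrix.det_succ_column _ (Fin.last n), Fin.sum_univ_castSucc]
    have hz : ∀ i : Fin n, (-1 : ℂ) ^ (((i.castSucc : Fin (n+1)) : ℕ) + ((Fin.last n : Fin (n+1)) : ℕ))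
        * B i.castSucc (Fin.last n)
        * (B.submatrix i.castSucc.succAbove (Fin.last n).succAbove).det = 0 := by
      intro i
      have hi := i.isLt
      have : B i.castSucc (Fin.last n) = 0 := by
        rw [hB]
        simp only [Matrix.submatrix_apply, hcol, triM, Matrix.of_apply, Fin.coe_castSucc,
          Fin.val_last]
        split_ifs <;> first | rfl | omega
      rw [this, mul_zero, zero_mul]
    rw [Finset.sum_eq_zero fun i _ => hz i, zero_add]
    have hent : B (Fin.last n) (Fin.last n) = c n := by
      rw [hB]
      simp only [Matrix.submatrix_apply, hcol, triM, Matrix.of_apply, Fin.coe_castSucc,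
        Fin.val_last]
      split_ifs <;> first | rfl | omega
    have hsub : B.submatrix (Fin.last n).succAbove (Fin.last n).succAbove = triM d c e n := by
      rw [Fin.succAbove_last, hB]
      ext i j
      have hj := j.isLt
      simp only [Matrix.submatrix_apply, Matrix.submatrix_submatrix, Function.comp]
      rw [Fin.succAbove_of_castSucc_lt _ _ (by simp [Fin.lt_def, hj])]
      simp only [triM, Matrix.of_apply, Fin.coe_castSucc]
    rw [hent, hsub]
    simp
  rw [hsign1, hsign2, hent1, hent2, hsub2, hminor]
  ring


lemma exists_z_aux (a b : ℂ) (hb : b ≠ 0) : ∃ z : ℂ, z ≠ 0 ∧ a * z = b * z^2 + b := by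
  obtain ⟨s, hs⟩ := IsAlgClosed.exists_pow_nat_eq (a^2 - 4*b^2) (n := 2) (by norm_num)
  refine ⟨(a + s) / (2*b), ?_, ?_⟩
  · intro h
    apply hb
    have h2 : a * ((a + s) / (2*b)) = b * ((a + s) / (2*b))^2 + b := by
      field_simp
      ring_nf
      linear_combination -hs
    rw [h] at h2
    simpa using h2.symm
  · field_simp
    ring_nf
    linear_combination -hs


lemma key_det_aux (N : ℕ) (a b z : ℂ) (hz0 : z ≠ 0) (hzq : a * z = b * z^2 + b) :
    ∀ k, 1 ≤ k → k ≤ N + 4 →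
      (triM (fun _ => a)
        (fun i => if i = 0 then 2*b else if i = N+3 then b else -b)
        (fun i => if i = 0 then b else if i = N+3 then 2*b else -b) k).det
      = b ^ k * (z ^ k + (z⁻¹) ^ k) := by
  set c : ℕ → ℂ := fun i => if i = 0 then 2*b else if i = N+3 then b else -b with hc
  set e : ℕ → ℂ := fun i => if i = 0 then b else if i = N+3 then 2*b else -b with he
  have hw : z * z⁻¹ = 1 := mul_inv_cancel₀ hz0
  have ha : a = b * (z + z⁻¹) := by
    have h : (a - b * (z + z⁻¹)) * z = 0 := by linear_combination hzq - b * hw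
    rcases mul_eq_zero.1 h with h' | h'
    · exact sub_eq_zero.1 h'
    · exact absurd h' hz0
  intro k
  induction k using Nat.strong_induction_on with
  | _ k ih =>
    match k with
    | 0 => intro h; omega
    | 1 =>
      intro _ _
      rw [Matrix.det_fin_one]
      show a = _
      rw [ha]; ring
    | 2 =>
      intro _ _
      rw [show (2:ℕ) = 0 + 2 from rfl, triM_peel, Matrix.det_fin_one, Matrix.det_fin_zero]
      show a * a - c 0 * e 0 * 1 = _
      have hc0 : c 0 = 2*b := by simp [hc]
      have he0 : e 0 = b := by simp [he]
      rw [hc0, he0, ha]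
      linear_combination 2*b^2*hw
    | (m+3) =>
      intro _ hk2
      rw [show m + 3 = (m+1) + 2 from rfl, triM_peel,
        ih (m+2) (by omega) (by omega) (by omega),
        ih (m+1) (by omega) (by omega) (by omega)]
      have hcm : c (m+1) = -b := by simp only [hc]; rw [if_neg (by omega), if_neg (by omega)]
      have hem : e (m+1) = -b := by simp only [he]; rw [if_neg (by omega), if_neg (by omega)]
      rw [hcm, hem]
      show a * _ - _ = _
      rw [ha]
      linear_combination b^(m+3) * (z^(m+1) + (z⁻¹)^(m+1)) * hw


lemma prod_rhs_aux (N : ℕ) (a b z : ℂ) (hz0 : z ≠ 0) (hzq : a * z = b * z^2 + b) :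
    (∏ k ∈ Finset.Icc 1 (N+5),
      (a + 2 * b * (Real.cos (((k : ℝ) - 1) * Real.pi / (((N+5 : ℕ) : ℝ) - 1)) : ℂ)))
    = (b * z⁻¹)^(N+5) * (((z^2)^(N+4) - 1) * (z^2 - 1)) := by
  have hw : z * z⁻¹ = 1 := mul_inv_cancel₀ hz0
  set θ : ℕ → ℝ := fun k => ((k : ℝ) - 1) * Real.pi / (((N+5 : ℕ) : ℝ) - 1) with hθ
  set u : ℕ → ℂ := fun k => Complex.exp ((θ k : ℂ) * I) with hu
  -- step 1 : factor each term
  have step1 : ∀ k ∈ Finset.Icc 1 (N+5),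
      (a + 2 * b * (Real.cos (θ k) : ℂ))
        = b * z⁻¹ * ((z + u k) * (z + Complex.exp (-(θ k : ℂ) * I))) := by
    intro k hk
    have h2c : 2 * (Real.cos (θ k) : ℂ) = Complex.exp ((θ k : ℂ) * I)
        + Complex.exp (-(θ k : ℂ) * I) := by
      rw [Complex.ofReal_cos]; exact Complex.two_cos _
    have huv : Complex.exp ((θ k : ℂ) * I) * Complex.exp (-(θ k : ℂ) * I) = 1 := by
      rw [← Complex.exp_add]; ring_nf; exact Complex.exp_zero
    have hmul : z * (a + 2 * b * (Real.cos (θ k) : ℂ))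
        = z * (b * z⁻¹ * ((z + u k) * (z + Complex.exp (-(θ k : ℂ) * I)))) := by
      simp only [hu]
      linear_combination hzq + b * huv + b * z * h2c
        + b * (z + Complex.exp ((θ k : ℂ) * I)) * (z + Complex.exp (-(θ k : ℂ) * I)) * hw
        - 2*b*(z*Complex.exp ((θ k : ℂ) * I) + z*Complex.exp (-(θ k : ℂ) * I) + z^2 + 1) * hw
        - 2*b*z*z⁻¹ * huv
    exact mul_left_cancel₀ hz0 hmul
  rw [Finset.prod_congr rfl step1]
  rw [Finset.prod_mul_distrib, Finset.prod_const, Nat.card_Icc,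
    Finset.prod_mul_distrib]
  simp only [Nat.add_sub_cancel]
  -- step 3 : reflect the second product
  have step3 : (∏ k ∈ Finset.Icc 1 (N+5), (z + Complex.exp (-(θ k : ℂ) * I)))
      = ∏ k ∈ Finset.Icc 1 (N+5), (z - u k) := by
    apply Finset.prod_nbij' (fun k => N+6-k) (fun k => N+6-k)
      (by intro k hk; simp only [Finset.mem_Icc] at *; omega)
      (by intro k hk; simp only [Finset.mem_Icc] at *; omega)
      (by intro k hk; simp only [Finset.mem_Icc] at *; omega)
      (by intro k hk; simp only [Finset.mem_Icc] at *; omega)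
    intro k hk
    simp only [Finset.mem_Icc] at hk
    have hm : ((N:ℂ) + 5) - 1 ≠ 0 := by
      have h4 : ((N:ℂ) + 5) - 1 = ((N+4 : ℕ) : ℂ) := by push_cast; ring
      rw [h4]
      exact Nat.cast_ne_zero.mpr (by omega)
    have hrefl : (-(θ k : ℂ)) * I = (θ (N+6-k) : ℂ) * I - Real.pi * I := by
      simp only [hθ]
      push_cast [Nat.cast_sub (by omega : k ≤ N+6)]
      field_simp
      ring
    have hexp : Complex.exp (-(θ k : ℂ) * I) = - u (N+6-k) := by
      rw [hrefl, Complex.exp_sub, Complex.exp_pi_mul_I, hu]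
      simp [div_neg]
    rw [hexp]
    ring
  rw [step3, ← Finset.prod_mul_distrib]
  set τ : ℂ := Complex.exp (2 * Real.pi * I / ((N+4 : ℕ) : ℂ)) with hτ
  have hm : ((N:ℂ) + 5) - 1 ≠ 0 := by
    have h4 : ((N:ℂ) + 5) - 1 = ((N+4 : ℕ) : ℂ) := by push_cast; ring
    rw [h4]
    exact Nat.cast_ne_zero.mpr (by omega)
  have hm4 : ((N+4 : ℕ) : ℂ) ≠ 0 := Nat.cast_ne_zero.mpr (by omega)
  have step4 : ∀ k ∈ Finset.Icc 1 (N+5),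
      (z + u k) * (z - u k) = z^2 - τ^(k-1) := by
    intro k hk
    simp only [Finset.mem_Icc] at hk
    have hτk : τ^(k-1) = Complex.exp (((k-1 : ℕ) : ℂ) * (2 * Real.pi * I / ((N+4 : ℕ) : ℂ))) := by
      rw [Complex.exp_nat_mul]
    have hu2 : u k ^ 2 = Complex.exp (((2:ℕ) : ℂ) * ((θ k : ℂ) * I)) := by
      rw [Complex.exp_nat_mul]
    have hexpeq : ((2:ℕ) : ℂ) * ((θ k : ℂ) * I) = ((k-1 : ℕ) : ℂ) * (2 * Real.pi * I / ((N+4 : ℕ) : ℂ)) := by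
      simp only [hθ]
      push_cast [Nat.cast_sub (by omega : 1 ≤ k)]
      have hm' : (N:ℂ) + 4 ≠ 0 := by
        have : ((N+4 : ℕ) : ℂ) = (N:ℂ) + 4 := by push_cast; ring
        rwa [this] at hm4
      field_simp
      ring
    rw [hτk, ← hexpeq, ← hu2]
    ring
  rw [Finset.prod_congr rfl step4]
  have step5 : (∏ k ∈ Finset.Icc 1 (N+5), (z^2 - τ^(k-1)))
      = ∏ j ∈ Finset.range (N+5), (z^2 - τ^j) := by
    apply Finset.prod_nbij' (fun k => k-1) (fun j => j+1)
      (by intro k hk; simp only [Finset.mem_Icc, Finset.mem_range] at *; omega)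
      (by intro j hj; simp only [Finset.mem_Icc, Finset.mem_range] at *; omega)
      (by intro k hk; simp only [Finset.mem_Icc] at *; omega)
      (by intro j hj; simp only [Finset.mem_range] at *; omega)
    intro k hk
    rfl
  rw [step5, Finset.prod_range_succ]
  have hτtop : τ^(N+4) = 1 := by
    rw [hτ, ← Complex.exp_nat_mul, mul_div_cancel₀ _ hm4, Complex.exp_two_pi_mul_I]
  have hprim : ∏ j ∈ Finset.range (N+4), (z^2 - τ^j) = (z^2)^(N+4) - 1 := by
    have hpr : IsPrimitiveRoot τ (N+4) := Complex.isPrimitiveRoot_exp (N+4) (by omega)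
    have h := X_pow_sub_C_eq_prod hpr (by omega : 0 < N+4) (one_pow (N+4))
    have h2 := congrArg (Polynomial.eval (z^2)) h
    simp only [Polynomial.eval_sub, Polynomial.eval_pow, Polynomial.eval_X, Polynomial.eval_C,
      Polynomial.eval_prod, Polynomial.eval_mul, mul_one] at h2
    exact h2.symm
  rw [hτtop, hprim]


lemma det_lhs_aux (N : ℕ) (a b z : ℂ) (hz0 : z ≠ 0) (hzq : a * z = b * z^2 + b) :
    (matA (N+5) a b).det
      = b^(N+5) * (z^(N+5) + (z⁻¹)^(N+5) - z^(N+3) - (z⁻¹)^(N+3)) := by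
  have hw : z * z⁻¹ = 1 := mul_inv_cancel₀ hz0
  have ha : a = b * (z + z⁻¹) := by
    have h : (a - b * (z + z⁻¹)) * z = 0 := by linear_combination hzq - b * hw
    rcases mul_eq_zero.1 h with h' | h'
    · exact sub_eq_zero.1 h'
    · exact absurd h' hz0
  set c : ℕ → ℂ := fun i => if i = 0 then 2*b else if i = N+3 then b else -b with hc
  set e : ℕ → ℂ := fun i => if i = 0 then b else if i = N+3 then 2*b else -b with he
  have hAeq : matA (N+5) a b = triM (fun _ => a) c e (N+5) := by
    ext i j
    have hi := i.isLt
    have hj := j.isLt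
    simp only [matA, triM, Matrix.of_apply, hc, he]
    split_ifs <;> first | rfl | omega
  rw [hAeq, show N + 5 = (N+3) + 2 from rfl, triM_peel,
    key_det_aux N a b z hz0 hzq (N+4) (by omega) (by omega),
    key_det_aux N a b z hz0 hzq (N+3) (by omega) (by omega)]
  have hc3 : c (N+3) = b := by simp only [hc]; rw [if_neg (by omega)]; simp
  have he3 : e (N+3) = 2*b := by simp only [he]; rw [if_neg (by omega)]; simp
  rw [hc3, he3]
  show a * _ - _ = _
  rw [ha]
  linear_combination b^(N+5) * (z^(N+3) + (z⁻¹)^(N+3)) * hw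

/-- For `n ≥ 5`, `a b : ℂ` with `b ≠ 0`,
`det A = ∏_{k=1}^{n} (a + 2b·cos((k-1)π/(n-1)))`. -/
theorem det_matA_prod (n : ℕ) (hn : 5 ≤ n) (a b : ℂ) (hb : b ≠ 0) :
    Matrix.det (matA n a b) =
      ∏ k ∈ Finset.Icc 1 n,
        (a + 2 * b * (Real.cos (((k : ℝ) - 1) * Real.pi / ((n : ℝ) - 1)) : ℂ)) := by
  obtain ⟨N, rfl⟩ : ∃ N, n = N + 5 := ⟨n - 5, by omega⟩
  obtain ⟨z, hz0, hzq⟩ := exists_z_aux a b hb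
  rw [det_lhs_aux N a b z hz0 hzq, prod_rhs_aux N a b z hz0 hzq]
  have hw : z * z⁻¹ = 1 := mul_inv_cancel₀ hz0
  field_simp
  simp only [div_pow, one_pow]
  field_simp
  ring
end

section
/- Let n ≥ 5 be an integer and let A† be the n×n tridiagonal matrix associated with a := 2 and b := i (where i = √−1). Then det(A†) = (2 + 2i)·P_n, where P_n is the n-th Pell number. -/
/-- The `n × n` complex tridiagonal matrix `A†` (1-based indices): `A†_{1,1} = A†_{n,n} = a + b`,
`A†_{j,j} = a` for `2 ≤ j ≤ n-1`, `A†_{1,2} = A†_{2,1} = b`, `A†_{n-1,n} = A†_{n,n-1} = b`,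
`A†_{j,j+1} = A†_{j+1,j} = -b` for `2 ≤ j ≤ n-2`, all other entries `0`. -/
def matAdag (n : ℕ) (a b : ℂ) : Matrix (Fin n) (Fin n) ℂ :=
  Matrix.of fun i j =>
    let i' := (i : ℕ) + 1
    let j' := (j : ℕ) + 1
    if i' = j' then (if i' = 1 ∨ i' = n then a + b else a)
    else if (i' = 1 ∧ j' = 2) ∨ (i' = 2 ∧ j' = 1) ∨ (i' = n - 1 ∧ j' = n) ∨ (i' = n ∧ j' = n - 1) then b
    else if (i' + 1 = j' ∨ j' + 1 = i') ∧ 2 ≤ min i' j' ∧ min i' j' ≤ n - 2 then -b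
    else 0

/-- Pell numbers: `P 0 = 0`, `P 1 = 1`, `P (k+2) = 2 * P (k+1) + P k`. -/
def pell : ℕ → ℕ
  | 0 => 0
  | 1 => 1
  | (k + 2) => 2 * pell (k + 1) + pell k

/-- generic tridiagonal matrix -/
def tri (d u l : ℕ → ℂ) (n : ℕ) : Matrix (Fin n) (Fin n) ℂ :=
  Matrix.of fun i j =>
    if (j : ℕ) = (i : ℕ) + 1 then u i
    else if (i : ℕ) = (j : ℕ) + 1 then l j
    else if (i : ℕ) = (j : ℕ) then d i
    else 0

theorem det_tri_aux (n : ℕ) (d u l : ℕ → ℂ) :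
    ((tri d u l (n+2)).submatrix Fin.succ (Fin.succ 0).succAbove).det =
      l 0 * (tri (fun j => d (j+2)) (fun j => u (j+2)) (fun j => l (j+2)) n).det := by
  have hsA : ∀ j : Fin (n+1), (((Fin.succ (0 : Fin (n+1)) : Fin (n+2)).succAbove j) : ℕ)
      = if (j:ℕ) = 0 then 0 else (j:ℕ)+1 := by
    intro j
    rcases j with ⟨jv, hj⟩
    simp [Fin.succAbove, Fin.lt_def, Fin.castSucc, Fin.castAdd, Fin.castLE]
    split_ifs <;> simp_all
  rw [Matrix.det_succ_column_zero, Fin.sum_univ_succ]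
  have hz : ∀ i : Fin n, (tri d u l (n+2)).submatrix Fin.succ (Fin.succ 0).succAbove i.succ 0 = 0 := by
    intro i
    simp only [Matrix.submatrix_apply, tri, Matrix.of_apply, Fin.val_succ]
    rw [show (((Fin.succ (0 : Fin (n+1)) : Fin (n+2)).succAbove 0) : ℕ) = 0 by rw [hsA]; simp]
    split_ifs <;> first | rfl | omega | exact (by assumption : False).elim
  have h0 : (tri d u l (n+2)).submatrix Fin.succ (Fin.succ 0).succAbove 0 0 = l 0 := by
    simp only [Matrix.submatrix_apply, tri, Matrix.of_apply]
    rw [show (((Fin.succ (0 : Fin (n+1)) : Fin (n+2)).succAbove 0) : ℕ) = 0 by rw [hsA]; simp]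
    norm_num
  have hm : ((tri d u l (n+2)).submatrix Fin.succ (Fin.succ 0).succAbove).submatrix
      (Fin.succAbove 0) Fin.succ = tri (fun j => d (j+2)) (fun j => u (j+2)) (fun j => l (j+2)) n := by
    ext i j
    simp only [Matrix.submatrix_apply, Fin.succAbove_zero, tri, Matrix.of_apply, Fin.val_succ]
    rw [show (((Fin.succ (0 : Fin (n+1)) : Fin (n+2)).succAbove j.succ) : ℕ) = (j:ℕ)+2 by
      rw [hsA]; simp]
    split_ifs <;> first | rfl | omega | exact (by assumption : False).elim
  simp only [hz, mul_zero, zero_mul, Finset.sum_const_zero, add_zero]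
  rw [h0, hm]
  simp

theorem det_tri (d u l : ℕ → ℂ) (n : ℕ) :
    (tri d u l (n + 2)).det =
      d 0 * (tri (fun j => d (j+1)) (fun j => u (j+1)) (fun j => l (j+1)) (n+1)).det
      - u 0 * l 0 * (tri (fun j => d (j+2)) (fun j => u (j+2)) (fun j => l (j+2)) n).det := by
  rw [Matrix.det_succ_row_zero, Fin.sum_univ_succ, Fin.sum_univ_succ]
  have hz : ∀ j : Fin n, tri d u l (n+2) 0 j.succ.succ = 0 := by
    intro j; simp [tri]
  have h00 : tri d u l (n+2) 0 0 = d 0 := by simp [tri]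
  have h01 : tri d u l (n+2) 0 (Fin.succ 0) = u 0 := by simp [tri]
  have hm0 : (tri d u l (n+2)).submatrix Fin.succ (Fin.succAbove 0) =
      tri (fun j => d (j+1)) (fun j => u (j+1)) (fun j => l (j+1)) (n+1) := by
    ext i j
    simp only [Matrix.submatrix_apply, Fin.succAbove_zero, tri, Matrix.of_apply, Fin.val_succ]
    split_ifs <;> first | rfl | omega
  simp only [hz, mul_zero, zero_mul, Finset.sum_const_zero, add_zero]
  rw [h00, h01, hm0, det_tri_aux]
  simp [Fin.val_succ]
  ring

/-- diagonal entries -/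
def dD (n : ℕ) (j : ℕ) : ℂ := if j = 0 ∨ j = n - 1 then 2 + Complex.I else 2
/-- off-diagonal entries -/
def uU (n : ℕ) (j : ℕ) : ℂ := if j = 0 ∨ j = n - 2 then Complex.I else -Complex.I

noncomputable def S (n m : ℕ) : ℂ :=
  (tri (fun j => dD n (j + (n - m))) (fun j => uU n (j + (n - m)))
    (fun j => uU n (j + (n - m))) m).det

theorem uU_sq (n x : ℕ) : uU n x * uU n x = -1 := by
  unfold uU; split_ifs <;> simp [Complex.I_mul_I]

theorem S_rec (n m : ℕ) (h : m + 2 ≤ n) :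
    S n (m + 2) = dD n (n - m - 2) * S n (m + 1) - uU n (n - m - 2) * uU n (n - m - 2) * S n m := by
  unfold S
  rw [det_tri]
  have e1 : (fun j => dD n (j + 1 + (n - (m + 2)))) = (fun j => dD n (j + (n - (m + 1)))) := by
    funext j; congr 1; omega
  have e2 : (fun j => uU n (j + 1 + (n - (m + 2)))) = (fun j => uU n (j + (n - (m + 1)))) := by
    funext j; congr 1; omega
  have e3 : (fun j => dD n (j + 2 + (n - (m + 2)))) = (fun j => dD n (j + (n - m))) := by
    funext j; congr 1; omega
  have e4 : (fun j => uU n (j + 2 + (n - (m + 2)))) = (fun j => uU n (j + (n - m))) := by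
    funext j; congr 1; omega
  have e5 : (0 : ℕ) + (n - (m + 2)) = n - m - 2 := by omega
  simp only [e5]
  congr 1
  · congr 1
    rw [show (tri (fun j => (fun j => dD n (j + (n - (m+2)))) (j+1))
        (fun j => (fun j => uU n (j + (n - (m+2)))) (j+1))
        (fun j => (fun j => uU n (j + (n - (m+2)))) (j+1)) (m+1)) =
        (tri (fun j => dD n (j + (n - (m+1)))) (fun j => uU n (j + (n - (m+1))))
          (fun j => uU n (j + (n - (m+1)))) (m+1)) by
      simp only []; rw [e1, e2]]
  · congr 1
    rw [show (tri (fun j => (fun j => dD n (j + (n - (m+2)))) (j+2))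
        (fun j => (fun j => uU n (j + (n - (m+2)))) (j+2))
        (fun j => (fun j => uU n (j + (n - (m+2)))) (j+2)) m) =
        (tri (fun j => dD n (j + (n - m))) (fun j => uU n (j + (n - m)))
          (fun j => uU n (j + (n - m))) m) by
      simp only []; rw [e3, e4]]

theorem S_zero (n : ℕ) : S n 0 = 1 := by
  unfold S; exact Matrix.det_fin_zero

theorem S_one (n : ℕ) : S n 1 = 2 + Complex.I := by
  unfold S
  rw [Matrix.det_fin_one]
  simp [tri, dD]

theorem S_formula (n : ℕ) (hn : 5 ≤ n) :
    ∀ m, 1 ≤ m → m + 1 ≤ n → S n m = (2 + Complex.I) * pell m + pell (m - 1) := by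
  intro m
  induction m using Nat.strong_induction_on with
  | _ m ih =>
    match m with
    | 0 => intro h _; exact absurd h (by omega)
    | 1 => intro _ _; rw [S_one]; simp [pell]
    | (k + 2) =>
      intro _ h2
      rw [S_rec n k (by omega), uU_sq]
      have hd : dD n (n - k - 2) = 2 := by
        unfold dD
        rw [if_neg]; omega
      rw [hd]
      match k with
      | 0 =>
        rw [S_one, S_zero]
        show (2:ℂ) * (2 + Complex.I) - -1 * 1 = (2 + Complex.I) * pell 2 + pell 1
        have : (pell 2 : ℂ) = 2 := by norm_num [pell]
        rw [this]; norm_num [pell]; ring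
      | (t + 1) =>
        rw [ih (t + 2) (by omega) (by omega) (by omega), ih (t + 1) (by omega) (by omega) (by omega)]
        have p3 : pell (t + 3) = 2 * pell (t + 2) + pell (t + 1) := rfl
        have p2 : pell (t + 2) = 2 * pell (t + 1) + pell t := rfl
        show (2:ℂ) * ((2 + Complex.I) * pell (t+2) + pell (t+2-1))
            - -1 * ((2 + Complex.I) * pell (t+1) + pell (t+1-1))
            = (2 + Complex.I) * pell (t+3) + pell (t+3-1)
        simp only [show t+2-1 = t+1 by omega, show t+1-1 = t by omega,
          show t+3-1 = t+2 by omega, p3, p2]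
        push_cast
        ring

theorem matAdag_eq_tri (n : ℕ) (hn : 5 ≤ n) :
    matAdag n 2 Complex.I = tri (fun j => dD n j) (fun j => uU n j) (fun j => uU n j) n := by
  ext i j
  have hi := i.isLt
  have hj := j.isLt
  simp only [matAdag, tri, dD, uU, Matrix.of_apply]
  split_ifs <;> first | rfl | omega | exact (by assumption : False).elim

/-- For `n ≥ 5`, the matrix `A†` with `a := 2`, `b := i` satisfies
`det A† = (2 + 2i)·P_n`, where `P_n` is the `n`-th Pell number. -/
theorem det_matAdag_pell (n : ℕ) (hn : 5 ≤ n) :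
    Matrix.det (matAdag n 2 Complex.I) = (2 + 2 * Complex.I) * (pell n : ℂ) := by
  obtain ⟨t, rfl⟩ : ∃ t, n = t + 5 := ⟨n - 5, by omega⟩
  have hdet : Matrix.det (matAdag (t+5) 2 Complex.I) = S (t+5) (t+5) := by
    rw [matAdag_eq_tri _ hn]
    unfold S
    simp only [Nat.sub_self, Nat.add_zero]
  rw [hdet]
  have h5 : t + 5 = (t + 3) + 2 := by omega
  rw [h5, S_rec (t+5) (t+3) (by omega), uU_sq]
  have hd : dD (t+5) ((t+5) - (t+3) - 2) = 2 + Complex.I := by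
    unfold dD
    rw [if_pos]; omega
  rw [hd]
  rw [S_formula (t+5) hn (t+4) (by omega) (by omega),
      S_formula (t+5) hn (t+3) (by omega) (by omega)]
  have p5 : pell (t + 5) = 2 * pell (t + 4) + pell (t + 3) := rfl
  have p4 : pell (t + 4) = 2 * pell (t + 3) + pell (t + 2) := rfl
  simp only [Nat.add_sub_cancel, show t + 4 - 1 = t + 3 from rfl, show t + 3 - 1 = t + 2 from rfl]
  rw [p5, p4]
  push_cast
  linear_combination (2 * (pell (t+3) : ℂ) + (pell (t+2) : ℂ)) * Complex.I_mul_I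
end
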